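/- arXiv:1910.14471 — 4 statements merged into one kernel-verified Lean document; each statement's English description precedes it below -/
import Mathlib

section
/- Let I₁ and I₂ be infinite sets. Then the Boolean algebras Powerset(I₁) and Powerset(I₂), each equipped with the unary predicate Fin interpreted as the ideal of finite subsets, are elementarily equivalent as structures in the language of Boolean algebras with one extra unary predicate. -/
open FirstOrder

/-- The language of Boolean algebras `{∧, ∨, ¬, 0, 1}` expanded by a unary predicate `Fin`. -/
def boolFinLang : FirstOrder.Language where
  Functions n := match n with
    | 0 => Bool
    | 1 => Unit
    | 2 => Bool
    | _ + 3 => Empty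
  Relations n := match n with
    | 1 => Unit
    | _ => Empty

/-- The powerset Boolean algebra `Powerset(I)` with `Fin` interpreted as finiteness. -/
instance boolFinStructure (I : Type*) : boolFinLang.Structure (Set I) where
  funMap {n} f x :=
    match n, f, x with
    | 0, true, _ => Set.univ
    | 0, false, _ => ∅
    | 1, _, x => (x 0)ᶜ
    | 2, true, x => x 0 ∪ x 1
    | 2, false, x => x 0 ∩ x 1
    | _ + 3, f, _ => nomatch f
  RelMap {n} r x :=
    match n, r, x with
    | 1, _, x => (x 0).Finite

instance propBoolFinStructure : boolFinLang.Structure Prop where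
  funMap {n} f x :=
    match n, f, x with
    | 0, true, _ => True
    | 0, false, _ => False
    | 1, _, x => ¬ x 0
    | 2, true, x => x 0 ∨ x 1
    | 2, false, x => x 0 ∧ x 1
    | _ + 3, f, _ => nomatch f
  RelMap {n} r _ :=
    match n, r with
    | 1, _ => False

open Set Language

namespace BoolFinAux

variable {I α β ι : Type*}

lemma mem_term_realize (t : boolFinLang.Term ι) (v : ι → Set I) (x : I) :
    x ∈ t.realize v ↔ t.realize (fun i => x ∈ v i) := by
  induction t with
  | var i => simp [Term.realize]
  | func f ts ih =>
    rename_i l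
    match l, f with
    | 0, true =>
      show x ∈ Set.univ ↔ True
      simp
    | 0, false =>
      show x ∈ (∅ : Set I) ↔ False
      simp
    | 1, _ =>
      show x ∈ (Term.realize v (ts 0))ᶜ ↔ ¬ (ts 0).realize _
      rw [mem_compl_iff, ih 0]
    | 2, true =>
      show x ∈ Term.realize v (ts 0) ∪ Term.realize v (ts 1) ↔ _ ∨ _
      rw [mem_union, ih 0, ih 1]
    | 2, false =>
      show x ∈ Term.realize v (ts 0) ∩ Term.realize v (ts 1) ↔ _ ∧ _
      rw [mem_inter_iff, ih 0, ih 1]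

def cell (v : ι → Set I) (s : ι → Prop) : Set I := {x | ∀ i, x ∈ v i ↔ s i}

lemma chi_eq {v : ι → Set I} {s : ι → Prop} {x : I} (hx : x ∈ cell v s) :
    (fun i => x ∈ v i) = s :=
  funext fun i => propext (hx i)

lemma mem_cell_self (v : ι → Set I) (x : I) : x ∈ cell v (fun i => x ∈ v i) :=
  fun _ => Iff.rfl

def SizeEq (A : Set α) (B : Set β) : Prop :=
  (A.Infinite ∧ B.Infinite) ∨ (A.Finite ∧ B.Finite ∧ A.ncard = B.ncard)

lemma SizeEq.symm {A : Set α} {B : Set β} (h : SizeEq A B) : SizeEq B A := by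
  rcases h with ⟨h1, h2⟩ | ⟨h1, h2, h3⟩
  · exact Or.inl ⟨h2, h1⟩
  · exact Or.inr ⟨h2, h1, h3.symm⟩

lemma SizeEq.finite_iff {A : Set α} {B : Set β} (h : SizeEq A B) : A.Finite ↔ B.Finite := by
  rcases h with ⟨h1, h2⟩ | ⟨h1, h2, _⟩
  · exact iff_of_false h1 h2
  · exact iff_of_true h1 h2

lemma SizeEq.nonempty_iff {A : Set α} {B : Set β} (h : SizeEq A B) : A.Nonempty ↔ B.Nonempty := by
  rcases h with ⟨h1, h2⟩ | ⟨h1, h2, h3⟩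
  · simp [h1.nonempty, h2.nonempty]
  · rw [← Set.ncard_pos h1, ← Set.ncard_pos h2, h3]

def CellEq (v₁ : ι → Set α) (v₂ : ι → Set β) : Prop :=
  ∀ s : ι → Prop, SizeEq (cell v₁ s) (cell v₂ s)

lemma CellEq.symm {v₁ : ι → Set α} {v₂ : ι → Set β} (h : CellEq v₁ v₂) : CellEq v₂ v₁ :=
  fun s => (h s).symm

lemma realize_eq_iff (t₁ t₂ : boolFinLang.Term ι) (v : ι → Set I) :
    t₁.realize v = t₂.realize v ↔
      ∀ s : ι → Prop, (cell v s).Nonempty → (t₁.realize s ↔ t₂.realize s) := by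
  constructor
  · rintro h s ⟨x, hx⟩
    rw [← chi_eq hx, ← mem_term_realize, ← mem_term_realize, h]
  · intro h
    ext x
    rw [mem_term_realize, mem_term_realize]
    exact h (fun i => x ∈ v i) ⟨x, mem_cell_self v x⟩

lemma realize_finite_iff [Finite ι] (t : boolFinLang.Term ι) (v : ι → Set I) :
    (t.realize v).Finite ↔ ∀ s : ι → Prop, t.realize s → (cell v s).Finite := by
  constructor
  · intro h s hs
    apply h.subset
    intro x hx
    rw [mem_term_realize, chi_eq hx]
    exact hs
  · intro h
    have hsub : t.realize v ⊆ ⋃ s ∈ {s : ι → Prop | t.realize s}, cell v s := by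
      intro x hx
      rw [mem_term_realize] at hx
      exact Set.mem_biUnion hx (mem_cell_self v x)
    exact ((Set.toFinite _).biUnion fun s hs => h s hs).subset hsub

lemma infinite_split {D : Set β} (hD : D.Infinite) :
    ∃ E ⊆ D, E.Infinite ∧ (D \ E).Infinite := by
  have f := hD.natEmbedding
  refine ⟨Set.range (fun n => (f (2 * n) : β)), ?_, ?_, ?_⟩
  · rintro _ ⟨n, rfl⟩; exact (f (2 * n)).2
  · apply Set.infinite_range_of_injective
    intro a b hab
    have := f.injective (Subtype.coe_injective hab)
    omega
  · apply Set.Infinite.mono (s := Set.range (fun n => (f (2 * n + 1) : β)))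
    · rintro _ ⟨n, rfl⟩
      refine ⟨(f (2 * n + 1)).2, ?_⟩
      rintro ⟨m, hm⟩
      have := f.injective (Subtype.coe_injective hm.symm)
      omega
    · apply Set.infinite_range_of_injective
      intro a b hab
      have := f.injective (Subtype.coe_injective hab)
      omega

lemma split {C : Set α} {D : Set β} (h : SizeEq C D) (X : Set α) :
    ∃ E ⊆ D, SizeEq (C ∩ X) E ∧ SizeEq (C \ X) (D \ E) := by
  rcases h with ⟨hC, hD⟩ | ⟨hC, hD, hcard⟩
  · rcases (C ∩ X).finite_or_infinite with h1 | h1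
      <;> rcases (C \ X).finite_or_infinite with h2 | h2
    · exact absurd ((h1.union h2).subset (fun z hz => by
        by_cases hx : z ∈ X
        · exact Or.inl ⟨hz, hx⟩
        · exact Or.inr ⟨hz, hx⟩)) hC
    · obtain ⟨E, hED, hEfin, hEcard⟩ := hD.exists_subset_ncard_eq (C ∩ X).ncard
      exact ⟨E, hED, Or.inr ⟨h1, hEfin, hEcard.symm⟩, Or.inl ⟨h2, hD.diff hEfin⟩⟩
    · obtain ⟨F, hFD, hFfin, hFcard⟩ := hD.exists_subset_ncard_eq (C \ X).ncard
      refine ⟨D \ F, diff_subset, Or.inl ⟨h1, hD.diff hFfin⟩, ?_⟩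
      rw [Set.diff_diff_cancel_left hFD]
      exact Or.inr ⟨h2, hFfin, hFcard.symm⟩
    · obtain ⟨E, hED, hE1, hE2⟩ := infinite_split hD
      exact ⟨E, hED, Or.inl ⟨h1, hE1⟩, Or.inl ⟨h2, hE2⟩⟩
  · haveI := hC.to_subtype
    haveI := hD.to_subtype
    have hne : Nonempty (↥C ≃ ↥D) :=
      Finite.card_eq.mp (by rw [Nat.card_coe_set_eq, Nat.card_coe_set_eq, hcard])
    obtain ⟨f⟩ := hne
    have hCfin := hC.to_subtype
    set g : C → β := fun c => (f c : β) with hg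
    have hginj : Function.Injective g := fun a b hab =>
      f.injective (Subtype.coe_injective hab)
    set S : Set C := {c : C | (c : α) ∈ X} with hS
    refine ⟨g '' S, ?_, ?_, ?_⟩
    · rintro _ ⟨c, _, rfl⟩; exact (f c).2
    · refine Or.inr ⟨hC.inter_of_left X, (S.toFinite.image g), ?_⟩
      have h1 : C ∩ X = Subtype.val '' S := by
        ext z
        constructor
        · rintro ⟨hz, hzX⟩; exact ⟨⟨z, hz⟩, hzX, rfl⟩
        · rintro ⟨c, hc, rfl⟩; exact ⟨c.2, hc⟩
      rw [h1, ncard_image_of_injective _ Subtype.coe_injective,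
        ncard_image_of_injective _ hginj]
    · have h2 : D \ g '' S = g '' Sᶜ := by
        ext d
        constructor
        · rintro ⟨hd, hdE⟩
          refine ⟨f.symm ⟨d, hd⟩, fun hmem => hdE ⟨f.symm ⟨d, hd⟩, hmem, by simp [hg]⟩, by simp [hg]⟩
        · rintro ⟨c, hc, rfl⟩
          exact ⟨(f c).2, fun ⟨c', hc', hcc⟩ => hc (hginj hcc ▸ hc')⟩
      have h3 : C \ X = Subtype.val '' Sᶜ := by
        ext z
        constructor
        · rintro ⟨hz, hzX⟩; exact ⟨⟨z, hz⟩, hzX, rfl⟩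
        · rintro ⟨c, hc, rfl⟩; exact ⟨c.2, hc⟩
      refine Or.inr ⟨hC.diff, hD.diff, ?_⟩
      rw [h2, h3, ncard_image_of_injective _ Subtype.coe_injective,
        ncard_image_of_injective _ hginj]

end BoolFinAux

namespace BoolFinAux

variable {α β : Type*}

lemma cell_snoc {n : ℕ} (a : Fin n → Set α) (x : Set α) (s : Fin (n + 1) → Prop) :
    cell (Fin.snoc a x) s =
      cell a (fun i => s i.castSucc) ∩ {z | z ∈ x ↔ s (Fin.last n)} := by
  ext z
  constructor
  · intro hz
    refine ⟨fun i => ?_, ?_⟩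
    · have := hz i.castSucc
      rwa [Fin.snoc_castSucc] at this
    · have := hz (Fin.last n)
      rwa [Fin.snoc_last] at this
  · rintro ⟨h1, h2⟩ i
    refine Fin.lastCases ?_ ?_ i
    · rwa [Fin.snoc_last]
    · intro j
      rw [Fin.snoc_castSucc]
      exact h1 j

lemma extend {n : ℕ} {a : Fin n → Set α} {b : Fin n → Set β} (h : CellEq a b) (x : Set α) :
    ∃ y : Set β, CellEq (Fin.snoc a x) (Fin.snoc b y) := by
  choose E hE1 hE2 hE3 using fun s : Fin n → Prop => split (h s) x
  refine ⟨⋃ s, E s, fun s' => ?_⟩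
  set s : Fin n → Prop := fun i => s' i.castSucc with hs
  have hyD : (⋃ t, E t) ∩ cell b s = E s := by
    ext p
    constructor
    · rintro ⟨hp1, hp2⟩
      obtain ⟨_, ⟨t, rfl⟩, hpt⟩ := hp1
      have : t = s := by
        rw [← chi_eq (hE1 t hpt), ← chi_eq hp2]
      rwa [← this]
    · intro hp
      exact ⟨Set.mem_iUnion.mpr ⟨s, hp⟩, hE1 s hp⟩
  rw [cell_snoc, cell_snoc]
  rcases Classical.em (s' (Fin.last n)) with hP | hP
  · have h1 : {z | z ∈ x ↔ s' (Fin.last n)} = x := by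
      ext z; simp [hP]
    have h2 : {z | z ∈ (⋃ t, E t) ↔ s' (Fin.last n)} = ⋃ t, E t := by
      ext z; simp [hP]
    rw [h1, h2, Set.inter_comm (cell b s), hyD]
    exact hE2 s
  · have h1 : {z | z ∈ x ↔ s' (Fin.last n)} = xᶜ := by
      ext z; simp [hP]
    have h2 : {z | z ∈ (⋃ t, E t) ↔ s' (Fin.last n)} = (⋃ t, E t)ᶜ := by
      ext z; simp [hP]
    have h3 : cell b s ∩ (⋃ t, E t)ᶜ = cell b s \ E s := by
      rw [← Set.diff_eq]
      ext z
      constructor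
      · rintro ⟨hz, hnz⟩
        exact ⟨hz, fun hE => hnz (Set.mem_iUnion.mpr ⟨s, hE⟩)⟩
      · rintro ⟨hz, hnE⟩
        refine ⟨hz, fun hU => hnE ?_⟩
        rw [← hyD]
        exact ⟨hU, hz⟩
    rw [h1, h2, h3, ← Set.diff_eq]
    exact hE3 s

lemma cellEq_sum {n : ℕ} {a : Fin n → Set α} {b : Fin n → Set β}
    {e₁ : Empty → Set α} {e₂ : Empty → Set β} (h : CellEq a b) :
    CellEq (Sum.elim e₁ a) (Sum.elim e₂ b) := by
  intro s
  have h1 : cell (Sum.elim e₁ a) s = cell a (fun i => s (Sum.inr i)) := by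
    ext z
    constructor
    · intro hz i; exact hz (Sum.inr i)
    · intro hz i
      cases i with
      | inl e => exact e.elim
      | inr j => exact hz j
  have h2 : cell (Sum.elim e₂ b) s = cell b (fun i => s (Sum.inr i)) := by
    ext z
    constructor
    · intro hz i; exact hz (Sum.inr i)
    · intro hz i
      cases i with
      | inl e => exact e.elim
      | inr j => exact hz j
  rw [h1, h2]
  exact h _

lemma main {n : ℕ} (φ : boolFinLang.BoundedFormula Empty n) :
    ∀ (a : Fin n → Set α) (b : Fin n → Set β), CellEq a b →
      ∀ (e₁ : Empty → Set α) (e₂ : Empty → Set β),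
      (φ.Realize e₁ a ↔ φ.Realize e₂ b) := by
  induction φ with
  | falsum => intro a b h e₁ e₂; rfl
  | equal t₁ t₂ =>
    intro a b h e₁ e₂
    have h' := cellEq_sum (e₁ := e₁) (e₂ := e₂) h
    show t₁.realize _ = t₂.realize _ ↔ t₁.realize _ = t₂.realize _
    rw [realize_eq_iff, realize_eq_iff]
    constructor
    · intro hh s hs
      exact hh s (((h' s).nonempty_iff).mpr hs)
    · intro hh s hs
      exact hh s (((h' s).nonempty_iff).mp hs)
  | @rel m l R ts =>
    intro a b h e₁ e₂
    have h' := cellEq_sum (e₁ := e₁) (e₂ := e₂) h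
    match l, R, ts with
    | 0, R, _ => exact R.elim
    | (k+2), R, _ => exact R.elim
    | 1, _, ts =>
      show Set.Finite (Term.realize (Sum.elim e₁ a) (ts 0)) ↔
        Set.Finite (Term.realize (Sum.elim e₂ b) (ts 0))
      rw [realize_finite_iff, realize_finite_iff]
      constructor
      · intro hh s hs
        exact ((h' s).finite_iff).mp (hh s hs)
      · intro hh s hs
        exact ((h' s).finite_iff).mpr (hh s hs)
  | imp φ ψ ihφ ihψ =>
    intro a b h e₁ e₂
    simp only [BoundedFormula.realize_imp]
    rw [ihφ a b h e₁ e₂, ihψ a b h e₁ e₂]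
  | all ψ ih =>
    intro a b h e₁ e₂
    simp only [BoundedFormula.realize_all]
    constructor
    · intro hh y
      obtain ⟨x, hx⟩ := extend h.symm y
      exact (ih _ _ hx.symm e₁ e₂).mp (hh x)
    · intro hh x
      obtain ⟨y, hy⟩ := extend h x
      exact (ih _ _ hy e₁ e₂).mpr (hh y)

lemma cellEq_zero {α β : Type*} [Infinite α] [Infinite β] :
    CellEq (fun _ : Fin 0 => (∅ : Set α)) (fun _ : Fin 0 => (∅ : Set β)) := by
  intro s
  have h1 : cell (fun _ : Fin 0 => (∅ : Set α)) s = Set.univ := by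
    ext z; exact ⟨fun _ => trivial, fun _ i => i.elim0⟩
  have h2 : cell (fun _ : Fin 0 => (∅ : Set β)) s = Set.univ := by
    ext z; exact ⟨fun _ => trivial, fun _ i => i.elim0⟩
  rw [h1, h2]
  exact Or.inl ⟨Set.infinite_univ, Set.infinite_univ⟩

end BoolFinAux

/-- For infinite `I₁`, `I₂`, the structures `(Powerset(I₁), Fin)` and `(Powerset(I₂), Fin)`
are elementarily equivalent. -/
theorem stmt8 (I₁ I₂ : Type) [Infinite I₁] [Infinite I₂] :
    boolFinLang.ElementarilyEquivalent (Set I₁) (Set I₂) := by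
  rw [Language.elementarilyEquivalent_iff]
  intro φ
  have := BoolFinAux.main (α := I₁) (β := I₂) φ
    (fun _ : Fin 0 => ∅) (fun _ : Fin 0 => ∅) BoolFinAux.cellEq_zero
    (fun e => e.elim) (fun e => e.elim)
  unfold Sentence.Realize Formula.Realize
  convert this using 2
end

section
/- Let (M_i)_{i∈I} and (N_i)_{i∈I} be families of structures in a first-order language L such that M_i ≡ N_i (elementarily equivalent) for every i ∈ I. Then the direct products ∏_{i∈I} M_i and ∏_{i∈I} N_i are elementarily equivalent as L-structures. -/
open FirstOrder FirstOrder.Language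

/-- The direct product `L`-structure, with functions and relations coordinatewise. -/
instance piStructure {L : FirstOrder.Language} {I : Type*} {M : I → Type*}
    [∀ i, L.Structure (M i)] : L.Structure (∀ i, M i) where
  funMap f x i := Structure.funMap f fun k => x k i
  RelMap r x := ∀ i, Structure.RelMap r fun k => x k i

namespace FVaux

open FirstOrder.Language FirstOrder.Language.BoundedFormula

variable {L : FirstOrder.Language} {I : Type*}

/-- Term realization in a product is coordinatewise. -/
lemma realize_term_pi {M : I → Type*} [∀ i, L.Structure (M i)] {α : Type*}
    (t : L.Term α) (x : α → ∀ i, M i) (i : I) :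
    t.realize x i = t.realize (fun a => x a i) := by
  induction t with
  | var a => rfl
  | func f ts ih =>
      show Structure.funMap f (fun k => (ts k).realize x) i = _
      show Structure.funMap f (fun k => (ts k).realize x i) = _
      simp only [ih]
      rfl

lemma relMap_pi {M : I → Type*} [∀ i, L.Structure (M i)] {k : ℕ}
    (R : L.Relations k) (x : Fin k → ∀ i, M i) :
    Structure.RelMap (M := ∀ i, M i) R x ↔ ∀ i, Structure.RelMap R fun k => x k i :=
  Iff.rfl

lemma snoc_coord {M : I → Type*} {n : ℕ} (xs : Fin n → ∀ i, M i) (a : ∀ i, M i) (i : I) :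
    (fun k => (Fin.snoc xs a : Fin (n + 1) → ∀ i, M i) k i) =
      Fin.snoc (fun k => xs k i) (a i) := by
  funext k
  refine Fin.lastCases ?_ ?_ k <;> simp

/-- `φ` together with the family `θ` and the set-predicate `P` form a
Feferman–Vaught determining family for the product of `M`. -/
def Good (M : I → Type*) [∀ i, L.Structure (M i)] {n : ℕ}
    (φ : L.BoundedFormula Empty n) {J : Type}
    (θ : J → L.BoundedFormula Empty n) (P : (J → Set I) → Prop) : Prop :=
  ∀ xs : Fin n → ∀ i, M i,
    φ.Realize (fun e => e.elim) xs ↔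
      P fun j => {i | (θ j).Realize (fun e => e.elim) fun k => xs k i}

variable {M : I → Type*} [∀ i, L.Structure (M i)]

lemma coordElim {n : ℕ} (xs : Fin n → ∀ i, M i) (i : I) :
    (fun a => Sum.elim (fun e : Empty => e.elim) xs a i) =
      Sum.elim (fun e : Empty => e.elim) (fun k => xs k i) := by
  funext a
  cases a with
  | inl e => exact e.elim
  | inr k => rfl

lemma good_falsum {n : ℕ} :
    Good M (falsum : L.BoundedFormula Empty n) (fun j : Empty => j.elim)
      (fun _ => False) := by
  intro xs
  simp [BoundedFormula.Realize]

lemma good_equal {n : ℕ} (t₁ t₂ : L.Term (Empty ⊕ Fin n)) :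
    Good M (t₁.bdEqual t₂) (fun _ : Unit => t₁.bdEqual t₂)
      (fun S => ∀ i, i ∈ S ()) := by
  intro xs
  simp only [realize_bdEqual, funext_iff]
  refine forall_congr' fun i => ?_
  rw [realize_term_pi, realize_term_pi, coordElim]
  simp [Set.mem_setOf_eq]

lemma good_rel {n k : ℕ} (R : L.Relations k) (ts : Fin k → L.Term (Empty ⊕ Fin n)) :
    Good M (R.boundedFormula ts) (fun _ : Unit => R.boundedFormula ts)
      (fun S => ∀ i, i ∈ S ()) := by
  intro xs
  rw [realize_rel, relMap_pi]
  refine forall_congr' fun i => ?_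
  simp only [realize_term_pi, coordElim]
  simp [Set.mem_setOf_eq]

lemma good_imp {n : ℕ} {φ ψ : L.BoundedFormula Empty n} {J₁ J₂ : Type}
    {θ₁ : J₁ → L.BoundedFormula Empty n} {θ₂ : J₂ → L.BoundedFormula Empty n}
    {P₁ : (J₁ → Set I) → Prop} {P₂ : (J₂ → Set I) → Prop}
    (h₁ : Good M φ θ₁ P₁) (h₂ : Good M ψ θ₂ P₂) :
    Good M (φ.imp ψ) (Sum.elim θ₁ θ₂)
      (fun S => P₁ (S ∘ Sum.inl) → P₂ (S ∘ Sum.inr)) := by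
  intro xs
  rw [realize_imp, h₁ xs, h₂ xs]
  rfl

/-- The existential "pattern" formula: there is a witness realizing exactly
the pattern `c` among the `θ j`. -/
noncomputable def pattern {n : ℕ} {J : Type} [Fintype J]
    (θ : J → L.BoundedFormula Empty (n + 1)) (c : J → Bool) :
    L.BoundedFormula Empty n :=
  (BoundedFormula.iInf
    (fun j => if c j then θ j else (θ j).not)).ex

lemma good_all {n : ℕ} {φ : L.BoundedFormula Empty (n + 1)} {J : Type} [Fintype J]
    {θ : J → L.BoundedFormula Empty (n + 1)} {P : (J → Set I) → Prop}
    (hφ : Good M φ θ P) :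
    Good M φ.all (pattern θ)
      (fun S => ∀ c : I → J → Bool,
        (∀ i, i ∈ S (c i)) → P fun j => {i | c i j = true}) := by
  intro xs
  rw [realize_all]
  constructor
  · intro H c hc
    have hch : ∀ i, ∃ b : M i,
        ∀ j, if c i j then (θ j).Realize (fun e => e.elim)
            (Fin.snoc (fun k => xs k i) b)
          else ¬ (θ j).Realize (fun e => e.elim) (Fin.snoc (fun k => xs k i) b) := by
      intro i
      have := hc i
      simp only [pattern, Set.mem_setOf_eq, realize_ex] at this
      obtain ⟨b, hb⟩ := this
      refine ⟨b, fun j => ?_⟩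
      rw [realize_iInf] at hb
      have hbj := hb j
      by_cases hcij : c i j = true
      · rw [if_pos hcij] at hbj ⊢
        exact hbj
      · rw [if_neg hcij] at hbj ⊢
        rw [BoundedFormula.realize_not] at hbj
        exact hbj
    choose b hb using hch
    have key := (hφ (Fin.snoc xs b)).mp (H b)
    have hE : (fun j => {i | (θ j).Realize (fun e : Empty => e.elim)
        fun k => (Fin.snoc xs b : Fin (n + 1) → ∀ i, M i) k i}) =
        fun j => {i | c i j = true} := by
      funext j
      ext i
      rw [Set.mem_setOf_eq, Set.mem_setOf_eq, snoc_coord]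
      have hbij := hb i j
      by_cases hcij : c i j = true
      · rw [if_pos hcij] at hbij
        simp [hcij, hbij]
      · rw [if_neg hcij] at hbij
        simp [hbij, hcij]
    rw [hE] at key
    exact key
  · intro H a
    classical
    set c : I → J → Bool := fun i j =>
      decide ((θ j).Realize (fun e => e.elim) (Fin.snoc (fun k => xs k i) (a i)))
      with hcdef
    have hmem : ∀ i, i ∈ {i | (pattern θ (c i)).Realize (fun e : Empty => e.elim)
        fun k => xs k i} := by
      intro i
      simp only [pattern, Set.mem_setOf_eq, realize_ex]
      refine ⟨a i, ?_⟩
      rw [realize_iInf]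
      intro j
      by_cases hj : (θ j).Realize (fun e => e.elim) (Fin.snoc (fun k => xs k i) (a i))
      · rw [if_pos (by simp [hcdef, hj])]
        exact hj
      · rw [if_neg (by simp [hcdef, hj])]
        rw [BoundedFormula.realize_not]
        exact hj
    have key := H c hmem
    rw [hφ (Fin.snoc xs a)]
    have hE : (fun j => {i | (θ j).Realize (fun e : Empty => e.elim)
        fun k => (Fin.snoc xs a : Fin (n + 1) → ∀ i, M i) k i}) =
        fun j => {i | c i j = true} := by
      funext j
      ext i
      rw [Set.mem_setOf_eq, Set.mem_setOf_eq, snoc_coord]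
      simp [hcdef]
    rw [hE]
    exact key

variable (M)

lemma key {N : I → Type*} [∀ i, L.Structure (N i)] :
    ∀ {n : ℕ} (φ : L.BoundedFormula Empty n),
      ∃ (J : Type) (_ : Fintype J) (θ : J → L.BoundedFormula Empty n)
        (P : (J → Set I) → Prop), Good M φ θ P ∧ Good N φ θ P := by
  intro n φ
  induction φ with
  | falsum => exact ⟨Empty, inferInstance, fun j => j.elim, fun _ => False,
      good_falsum, good_falsum⟩
  | equal t₁ t₂ => exact ⟨Unit, inferInstance, fun _ => t₁.bdEqual t₂,
      fun S => ∀ i, i ∈ S (), good_equal t₁ t₂, good_equal t₁ t₂⟩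
  | rel R ts => exact ⟨Unit, inferInstance, fun _ => R.boundedFormula ts,
      fun S => ∀ i, i ∈ S (), good_rel R ts, good_rel R ts⟩
  | imp φ ψ ih₁ ih₂ =>
      obtain ⟨J₁, f₁, θ₁, P₁, h₁M, h₁N⟩ := ih₁
      obtain ⟨J₂, f₂, θ₂, P₂, h₂M, h₂N⟩ := ih₂
      exact ⟨J₁ ⊕ J₂, @instFintypeSum J₁ J₂ f₁ f₂, Sum.elim θ₁ θ₂,
        fun S => P₁ (S ∘ Sum.inl) → P₂ (S ∘ Sum.inr),
        good_imp h₁M h₂M, good_imp h₁N h₂N⟩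
  | all φ ih =>
      obtain ⟨J, fJ, θ, P, hM, hN⟩ := ih
      letI := fJ
      letI : DecidableEq J := Classical.decEq J
      exact ⟨J → Bool, inferInstance, pattern θ,
        fun S => ∀ c : I → J → Bool,
          (∀ i, i ∈ S (c i)) → P fun j => {i | c i j = true},
        good_all hM, good_all hN⟩

/-- Any realization of a sentence with any empty valuations agrees with
`Sentence.Realize`. -/
lemma sentence_realize_eq {M' : Type*} [L.Structure M'] (φ : L.Sentence)
    (v : Empty → M') (xs : Fin 0 → M') :
    BoundedFormula.Realize φ v xs ↔ M' ⊨ φ := by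
  have hv : v = (default : Empty → M') := funext fun e => e.elim
  have hxs : xs = (default : Fin 0 → M') := funext fun k => k.elim0
  rw [Sentence.Realize, Formula.Realize, hv, hxs]

end FVaux

/-- Feferman–Vaught: if `M i ≡ N i` for all `i`, then `∏ M i ≡ ∏ N i`. -/
theorem stmt9 {L : FirstOrder.Language} {I : Type*} (M N : I → Type*)
    [∀ i, L.Structure (M i)] [∀ i, L.Structure (N i)]
    (h : ∀ i, L.ElementarilyEquivalent (M i) (N i)) :
    L.ElementarilyEquivalent (∀ i, M i) (∀ i, N i) := by
  rw [elementarilyEquivalent_iff]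
  intro φ
  obtain ⟨J, fJ, θ, P, hM, hN⟩ := FVaux.key (L := L) M (N := N) φ
  have hMφ := hM (fun k => (k.elim0 : ∀ i, M i))
  have hNφ := hN (fun k => (k.elim0 : ∀ i, N i))
  rw [FVaux.sentence_realize_eq] at hMφ hNφ
  rw [hMφ, hNφ]
  have hsets : (fun j => {i | (θ j).Realize (fun e : Empty => e.elim)
        fun k => (fun k => (k.elim0 : ∀ i, M i)) k i}) =
      fun j => {i | (θ j).Realize (fun e : Empty => e.elim)
        fun k => (fun k => (k.elim0 : ∀ i, N i)) k i} := by
    funext j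
    ext i
    rw [Set.mem_setOf_eq, Set.mem_setOf_eq,
      FVaux.sentence_realize_eq (θ j), FVaux.sentence_realize_eq (θ j)]
    exact elementarilyEquivalent_iff.mp (h i) (θ j)
  rw [hsets]
end

section
/- Let (h_i : M_i → N_i)_{i∈I} be a family of elementary embeddings of L-structures. Then the product map ∏ h_i : ∏_{i∈I} M_i → ∏_{i∈I} N_i is an elementary embedding of the product L-structures. -/
open FirstOrder FirstOrder.Language

namespace FVAux

variable {L : FirstOrder.Language} {I : Type*}

/-- Conjunction of a list of bounded formulas. -/
def conj {α : Type*} {n : ℕ} : List (L.BoundedFormula α n) → L.BoundedFormula α n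
  | [] => ⊤
  | ψ :: l => ψ ⊓ conj l

theorem realize_conj {α : Type*} {n : ℕ} {M : Type*} [L.Structure M]
    (l : List (L.BoundedFormula α n)) (v : α → M) (xs : Fin n → M) :
    (conj l).Realize v xs ↔ ∀ ψ ∈ l, ψ.Realize v xs := by
  induction l with
  | nil => simp [conj]
  | cons ψ l ih => simp [conj, ih]

theorem realize_term_pi {M : I → Type*} [∀ i, L.Structure (M i)] {β : Type*}
    (t : L.Term β) (v : β → ∀ i, M i) (i : I) :
    t.realize v i = t.realize (fun a => v a i) := by
  induction t with
  | var => rfl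
  | func f ts ih =>
      show Structure.funMap f (fun k => (ts k).realize v i) = _
      simp only [Term.realize]
      exact congrArg _ (funext fun k => ih k)

theorem sum_elim_pi {β γ : Type*} {M : I → Type*} (v : β → ∀ i, M i)
    (xs : γ → ∀ i, M i) (i : I) :
    (fun a => Sum.elim v xs a i) = Sum.elim (fun b => v b i) (fun j => xs j i) := by
  funext a; cases a <;> rfl

theorem realize_term_pi' {M : I → Type*} [∀ i, L.Structure (M i)] {α : Type*} {n : ℕ}
    (t : L.Term (α ⊕ Fin n)) (v : α → ∀ i, M i) (xs : Fin n → ∀ i, M i) (i : I) :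
    t.realize (Sum.elim v xs) i
      = t.realize (Sum.elim (fun a => v a i) (fun j => xs j i)) := by
  rw [realize_term_pi, sum_elim_pi]

theorem realize_equal_pi {P : I → Type*} [∀ i, L.Structure (P i)] {α : Type*} {n : ℕ}
    (t₁ t₂ : L.Term (α ⊕ Fin n)) (v : α → ∀ i, P i) (vs : Fin n → ∀ i, P i) :
    (BoundedFormula.equal t₁ t₂).Realize v vs ↔
      ∀ i, (BoundedFormula.equal t₁ t₂).Realize (fun a => v a i) (fun j => vs j i) := by
  simp only [BoundedFormula.Realize]
  rw [funext_iff]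
  exact forall_congr' fun i => by rw [realize_term_pi', realize_term_pi']

theorem realize_rel_pi {P : I → Type*} [∀ i, L.Structure (P i)] {α : Type*} {n l : ℕ}
    (R : L.Relations l) (ts : Fin l → L.Term (α ⊕ Fin n))
    (v : α → ∀ i, P i) (vs : Fin n → ∀ i, P i) :
    (BoundedFormula.rel R ts).Realize v vs ↔
      ∀ i, (BoundedFormula.rel R ts).Realize (fun a => v a i) (fun j => vs j i) := by
  show (∀ i, Structure.RelMap R fun k => (ts k).realize (Sum.elim v vs) i) ↔ _
  refine forall_congr' fun i => iff_of_eq (congrArg _ (funext fun k => ?_))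
  rw [realize_term_pi']

theorem snoc_pi {M : I → Type*} {n : ℕ} (xs : Fin n → ∀ i, M i) (a : ∀ i, M i) (i : I) :
    (fun j => Fin.snoc (α := fun _ => ∀ i, M i) xs a j i)
      = Fin.snoc (α := fun _ => M i) (fun j => xs j i) (a i) := by
  funext j
  refine Fin.lastCases ?_ ?_ j <;> simp

/-- The Feferman–Vaught style determinacy lemma. -/
theorem FV {M N : I → Type*} [∀ i, L.Structure (M i)] [∀ i, L.Structure (N i)]
    {α : Type*} {n : ℕ} (φ : L.BoundedFormula α n) :
    ∃ s : List (L.BoundedFormula α n),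
      ∀ (x : α → ∀ i, M i) (y : α → ∀ i, N i) (xs : Fin n → ∀ i, M i)
        (ys : Fin n → ∀ i, N i),
        (∀ i, ∀ ψ ∈ s, ψ.Realize (fun a => x a i) (fun j => xs j i) ↔
          ψ.Realize (fun a => y a i) (fun j => ys j i)) →
        (φ.Realize x xs ↔ φ.Realize y ys) := by
  induction φ with
  | falsum => exact ⟨[], fun _ _ _ _ _ => Iff.rfl⟩
  | equal t₁ t₂ =>
      refine ⟨[BoundedFormula.equal t₁ t₂], fun x y xs ys H => ?_⟩
      rw [realize_equal_pi, realize_equal_pi]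
      exact forall_congr' fun i => H i _ (List.mem_singleton_self _)
  | rel R ts =>
      refine ⟨[BoundedFormula.rel R ts], fun x y xs ys H => ?_⟩
      rw [realize_rel_pi, realize_rel_pi]
      exact forall_congr' fun i => H i _ (List.mem_singleton_self _)
  | imp φ₁ φ₂ ih₁ ih₂ =>
      obtain ⟨s₁, hs₁⟩ := ih₁
      obtain ⟨s₂, hs₂⟩ := ih₂
      refine ⟨s₁ ++ s₂, fun x y xs ys H => ?_⟩
      simp only [BoundedFormula.realize_imp]
      exact imp_congr
        (hs₁ x y xs ys fun i ψ hψ => H i ψ (List.mem_append_left _ hψ))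
        (hs₂ x y xs ys fun i ψ hψ => H i ψ (List.mem_append_right _ hψ))
  | @all n' φ' ih =>
      classical
      obtain ⟨s, hs⟩ := ih
      refine ⟨(s.sublists).map (fun t =>
        BoundedFormula.ex (conj (s.map (fun ψ => if ψ ∈ t then ψ else ψ.not)))),
        fun x y xs ys H => ?_⟩
      simp only [BoundedFormula.realize_all]
      constructor
      · intro hM b
        have key : ∀ i : I, ∃ c : M i, ∀ ψ ∈ s,
            (ψ.Realize (fun a => x a i)
                ((Fin.snoc (fun j => xs j i) c : Fin (n' + 1) → M i)) ↔
             ψ.Realize (fun a => y a i)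
                ((Fin.snoc (fun j => ys j i) (b i) : Fin (n' + 1) → N i))) := by
          intro i
          set t : List (L.BoundedFormula α (n' + 1)) := s.filter (fun ψ =>
            decide (ψ.Realize (fun a => y a i)
              ((Fin.snoc (fun j => ys j i) (b i) : Fin (n' + 1) → N i)))) with ht
          have htmem : ∀ ψ ∈ s, (ψ ∈ t ↔ ψ.Realize (fun a => y a i)
              ((Fin.snoc (fun j => ys j i) (b i) : Fin (n' + 1) → N i))) := by
            intro ψ hψ
            simp [ht, List.mem_filter, hψ]
          have hχ : (BoundedFormula.ex (conj (s.map fun ψ =>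
              if ψ ∈ t then ψ else ψ.not))).Realize (fun a => y a i)
              (fun j => ys j i) := by
            rw [BoundedFormula.realize_ex]
            refine ⟨b i, ?_⟩
            rw [realize_conj]
            intro χ hmem
            simp only [List.mem_map] at hmem
            obtain ⟨ψ, hψs, rfl⟩ := hmem
            by_cases hmem : ψ ∈ t
            · rw [if_pos hmem]
              exact (htmem ψ hψs).1 hmem
            · rw [if_neg hmem, BoundedFormula.realize_not]
              exact fun hr => hmem ((htmem ψ hψs).2 hr)
          have hχM := (H i _ (List.mem_map.2
            ⟨t, List.mem_sublists.2 List.filter_sublist, rfl⟩)).2 hχ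
          rw [BoundedFormula.realize_ex] at hχM
          obtain ⟨c, hc⟩ := hχM
          rw [realize_conj] at hc
          refine ⟨c, fun ψ hψ => ?_⟩
          by_cases hmem : ψ ∈ t
          · have := hc _ (List.mem_map.2 ⟨ψ, hψ, rfl⟩)
            rw [if_pos hmem] at this
            exact iff_of_true this ((htmem ψ hψ).1 hmem)
          · have := hc _ (List.mem_map.2 ⟨ψ, hψ, rfl⟩)
            rw [if_neg hmem, BoundedFormula.realize_not] at this
            exact iff_of_false this (fun hr => hmem ((htmem ψ hψ).2 hr))
        choose a ha using key
        refine (hs x y (Fin.snoc xs a) (Fin.snoc ys b) ?_).1 (hM a)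
        intro i ψ hψ
        rw [snoc_pi, snoc_pi]
        exact ha i ψ hψ
      · intro hN a
        have key : ∀ i : I, ∃ c : N i, ∀ ψ ∈ s,
            (ψ.Realize (fun a' => x a' i)
                ((Fin.snoc (fun j => xs j i) (a i) : Fin (n' + 1) → M i)) ↔
             ψ.Realize (fun a' => y a' i)
                ((Fin.snoc (fun j => ys j i) c : Fin (n' + 1) → N i))) := by
          intro i
          set t : List (L.BoundedFormula α (n' + 1)) := s.filter (fun ψ =>
            decide (ψ.Realize (fun a' => x a' i)
              ((Fin.snoc (fun j => xs j i) (a i) : Fin (n' + 1) → M i)))) with ht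
          have htmem : ∀ ψ ∈ s, (ψ ∈ t ↔ ψ.Realize (fun a' => x a' i)
              ((Fin.snoc (fun j => xs j i) (a i) : Fin (n' + 1) → M i))) := by
            intro ψ hψ
            simp [ht, List.mem_filter, hψ]
          have hχ : (BoundedFormula.ex (conj (s.map fun ψ =>
              if ψ ∈ t then ψ else ψ.not))).Realize (fun a' => x a' i)
              (fun j => xs j i) := by
            rw [BoundedFormula.realize_ex]
            refine ⟨a i, ?_⟩
            rw [realize_conj]
            intro χ hmem
            simp only [List.mem_map] at hmem
            obtain ⟨ψ, hψs, rfl⟩ := hmem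
            by_cases hmem : ψ ∈ t
            · rw [if_pos hmem]
              exact (htmem ψ hψs).1 hmem
            · rw [if_neg hmem, BoundedFormula.realize_not]
              exact fun hr => hmem ((htmem ψ hψs).2 hr)
          have hχN := (H i _ (List.mem_map.2
            ⟨t, List.mem_sublists.2 List.filter_sublist, rfl⟩)).1 hχ
          rw [BoundedFormula.realize_ex] at hχN
          obtain ⟨c, hc⟩ := hχN
          rw [realize_conj] at hc
          refine ⟨c, fun ψ hψ => ?_⟩
          by_cases hmem : ψ ∈ t
          · have := hc _ (List.mem_map.2 ⟨ψ, hψ, rfl⟩)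
            rw [if_pos hmem] at this
            exact iff_of_true ((htmem ψ hψ).1 hmem) this
          · have := hc _ (List.mem_map.2 ⟨ψ, hψ, rfl⟩)
            rw [if_neg hmem, BoundedFormula.realize_not] at this
            exact iff_of_false (fun hr => hmem ((htmem ψ hψ).2 hr)) this
        choose b hb using key
        refine (hs x y (Fin.snoc xs a) (Fin.snoc ys b) ?_).2 (hN b)
        intro i ψ hψ
        rw [snoc_pi, snoc_pi]
        exact hb i ψ hψ

end FVAux

/-- If `h i : M i → N i` are elementary embeddings, then the product map
`∏ h i : ∏ M i → ∏ N i` is an elementary embedding. -/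
theorem stmt10 {L : FirstOrder.Language} {I : Type*} (M N : I → Type*)
    [∀ i, L.Structure (M i)] [∀ i, L.Structure (N i)]
    (h : ∀ i, L.ElementaryEmbedding (M i) (N i)) :
    ∃ g : L.ElementaryEmbedding (∀ i, M i) (∀ i, N i),
      ∀ (x : ∀ i, M i) (i : I), g x i = h i (x i) := by
  refine ⟨⟨fun x i => h i (x i), ?_⟩, fun x i => rfl⟩
  intro n φ x
  obtain ⟨s, hs⟩ := FVAux.FV (M := M) (N := N) φ
  refine (hs x (fun a i => h i (x a i)) default default ?_).symm
  intro i ψ hψ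
  rw [show (fun j => (default : Fin 0 → ∀ i, N i) j i)
      = ((h i) ∘ fun j => (default : Fin 0 → ∀ i, M i) j i) from funext fun j => j.elim0]
  exact ((h i).map_boundedFormula ψ _ _).symm
end

section
/- If K₁ and K₂ are arithmetically equivalent number fields (same splitting type at all but finitely many primes), then [K₁ : ℚ] = [K₂ : ℚ]. -/
open NumberField UniqueFactorizationMonoid
open scoped nonZeroDivisors

open Classical in
/-- The splitting type of `p` in `K`: the multiset of residue degrees of the distinct
primes of `𝒪_K` above `p`. -/
noncomputable def splittingType (K : Type) [Field K] [NumberField K] (p : ℕ) : Multiset ℕ :=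
  ((factors (Ideal.map (algebraMap ℤ (𝓞 K)) (Ideal.span {(p : ℤ)}))).toFinset).val.map
    fun P => Ideal.inertiaDeg' (Ideal.span {(p : ℤ)}) P

section Aux
variable (K : Type) [Field K] [NumberField K]

lemma span_p_maximal {p : ℕ} (hp : p.Prime) : (Ideal.span {(p : ℤ)}).IsMaximal :=
  PrincipalIdealRing.isMaximal_of_irreducible (Nat.prime_iff_prime_int.mp hp).irreducible

lemma span_p_ne_bot {p : ℕ} (hp : p.Prime) : (Ideal.span {(p : ℤ)}) ≠ ⊥ := by
  simp [Ideal.span_singleton_eq_bot, hp.ne_zero, Int.natCast_eq_zero]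

lemma map_p_ne_bot {p : ℕ} (hp : p.Prime) :
    Ideal.map (algebraMap ℤ (𝓞 K)) (Ideal.span {(p : ℤ)}) ≠ ⊥ := by
  rw [Ne, Ideal.map_eq_bot_iff_of_injective (FaithfulSMul.algebraMap_injective ℤ (𝓞 K))]
  exact span_p_ne_bot hp

open Classical in
lemma sum_splittingType {p : ℕ} (hp : p.Prime)
    (hur : ∀ P : Ideal (𝓞 K), Prime P →
      ¬ (P ^ 2 ∣ Ideal.map (algebraMap ℤ (𝓞 K)) (Ideal.span {(p : ℤ)}))) :
    (splittingType K p).sum = Module.finrank ℚ K := by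
  haveI := span_p_maximal hp
  set M := Ideal.map (algebraMap ℤ (𝓞 K)) (Ideal.span {(p : ℤ)}) with hM
  have hM0 : M ≠ ⊥ := map_p_ne_bot K hp
  have key := Ideal.sum_ramification_inertia (𝓞 K) ℚ K
    (span_p_ne_bot hp)
  rw [← key]
  rw [splittingType]
  rw [show ((((factors M).toFinset).val.map
      fun P => Ideal.inertiaDeg' (Ideal.span {(p : ℤ)}) P)).sum
    = ∑ P ∈ (factors M).toFinset,
        Ideal.inertiaDeg' (Ideal.span {(p : ℤ)}) P from rfl]
  refine Finset.sum_congr rfl fun P hPmem => ?_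
  have hPfac : P ∈ factors M := Multiset.mem_toFinset.mp hPmem
  have hPprime : Prime P := prime_of_factor P hPfac
  have hP0 : P ≠ ⊥ := hPprime.ne_zero
  have he : Ideal.ramificationIdx' (Ideal.span {(p : ℤ)}) P = 1 := by
    rw [Ideal.IsDedekindDomain.ramificationIdx'_eq_factors_count hM0
      (Ideal.isPrime_of_prime hPprime) hP0]
    have h1 : 1 ≤ (factors M).count P := Multiset.one_le_count_iff_mem.mpr hPfac
    have h2 : (factors M).count P < 2 := by
      by_contra hc
      push_neg at hc
      refine hur P hPprime ?_
      refine pow_dvd_of_le_emultiplicity (k := 2) ?_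
      rw [emultiplicity_eq_count_normalizedFactors hPprime.irreducible hM0, normalize_eq,
        ← factors_eq_normalizedFactors]
      exact_mod_cast Nat.cast_le.mpr hc
    exact Nat.le_antisymm (Nat.lt_succ_iff.mp h2) h1
  rw [he, one_mul]
end Aux

section Aux3
variable (K : Type) [Field K] [NumberField K]

lemma differentIdeal_ne_bot' : differentIdeal ℤ (𝓞 K) ≠ ⊥ := by
  intro hbot
  have h := coeIdeal_differentIdeal ℤ ℚ K (𝓞 K)
  rw [hbot] at h
  rw [FractionalIdeal.coeIdeal_bot] at h
  have hd : FractionalIdeal.dual ℤ ℚ (1 : FractionalIdeal (𝓞 K)⁰ K) ≠ 0 :=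
    FractionalIdeal.dual_ne_zero ℤ ℚ one_ne_zero
  exact hd (by rwa [eq_comm, inv_eq_zero] at h)

/-- The set of primes ramifying in `K` (together with primality) is finite. -/
lemma ramified_finite :
    {p : ℕ | p.Prime ∧ ∃ P : Ideal (𝓞 K), Prime P ∧
      P ^ 2 ∣ Ideal.map (algebraMap ℤ (𝓞 K)) (Ideal.span {(p : ℤ)})}.Finite := by
  classical
  set S := {p : ℕ | p.Prime ∧ ∃ P : Ideal (𝓞 K), Prime P ∧
      P ^ 2 ∣ Ideal.map (algebraMap ℤ (𝓞 K)) (Ideal.span {(p : ℤ)})}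
  set D := differentIdeal ℤ (𝓞 K) with hD
  have hD0 : D ≠ ⊥ := differentIdeal_ne_bot' K
  set f : ℕ → Ideal (𝓞 K) := fun p =>
    if h : p ∈ S then h.2.choose else ⊥ with hf
  have hfspec : ∀ p ∈ S, Prime (f p) ∧
      (f p) ^ 2 ∣ Ideal.map (algebraMap ℤ (𝓞 K)) (Ideal.span {(p : ℤ)}) := by
    intro p hpS
    simp only [hf, dif_pos hpS]
    exact hpS.2.choose_spec
  have hdvdD : ∀ p ∈ S, f p ∣ D := by
    intro p hpS
    obtain ⟨hPr, hdvd⟩ := hfspec p hpS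
    haveI := span_p_maximal hpS.1
    have := pow_sub_one_dvd_differentIdeal (A := ℤ) (B := 𝓞 K) (f p) 2
      (span_p_ne_bot hpS.1) hdvd
    simpa using this
  refine Set.Finite.of_finite_image (f := f) ?_ ?_
  · refine Set.Finite.subset (factors D).toFinset.finite_toSet ?_
    rintro P ⟨p, hpS, rfl⟩
    obtain ⟨hPr, _⟩ := hfspec p hpS
    have : f p ∈ normalizedFactors D := by
      rw [mem_normalizedFactors_iff hD0]
      exact ⟨hPr, hdvdD p hpS⟩
    simpa [factors_eq_normalizedFactors] using Multiset.mem_toFinset.mpr this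
  · intro p hpS q hqS hfeq
    by_contra hne
    obtain ⟨hPrp, hdvdp⟩ := hfspec p hpS
    obtain ⟨hPrq, hdvdq⟩ := hfspec q hqS
    have hple : (algebraMap ℤ (𝓞 K)) (p : ℤ) ∈ f p :=
      Ideal.le_of_dvd (dvd_trans (dvd_pow_self _ two_ne_zero) hdvdp)
        (Ideal.mem_map_of_mem _ (Ideal.subset_span rfl))
    have hqle : (algebraMap ℤ (𝓞 K)) (q : ℤ) ∈ f p := by
      rw [hfeq]
      exact Ideal.le_of_dvd (dvd_trans (dvd_pow_self _ two_ne_zero) hdvdq)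
        (Ideal.mem_map_of_mem _ (Ideal.subset_span rfl))
    have hcop : IsCoprime (p : ℤ) (q : ℤ) := by
      rw [Int.isCoprime_iff_gcd_eq_one]
      exact_mod_cast (Nat.coprime_primes hpS.1 hqS.1).mpr hne
    obtain ⟨a, b, hab⟩ := hcop
    have : (1 : 𝓞 K) ∈ f p := by
      have := Ideal.add_mem (f p) (Ideal.mul_mem_left _ ((algebraMap ℤ (𝓞 K)) a) hple)
        (Ideal.mul_mem_left _ ((algebraMap ℤ (𝓞 K)) b) hqle)
      rw [← map_mul, ← map_mul, ← map_add, hab, map_one] at this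
      exact this
    exact (Ideal.isPrime_of_prime hPrp).ne_top (Ideal.eq_top_iff_one _ |>.mpr this)
end Aux3

/-- Arithmetically equivalent number fields have the same degree over `ℚ`. -/
theorem stmt14 (K₁ K₂ : Type) [Field K₁] [NumberField K₁] [Field K₂] [NumberField K₂]
    (h : {p : ℕ | p.Prime ∧ splittingType K₁ p ≠ splittingType K₂ p}.Finite) :
    Module.finrank ℚ K₁ = Module.finrank ℚ K₂ := by
  have hbad : ({p : ℕ | p.Prime ∧ splittingType K₁ p ≠ splittingType K₂ p} ∪
      ({p : ℕ | p.Prime ∧ ∃ P : Ideal (𝓞 K₁), Prime P ∧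
        P ^ 2 ∣ Ideal.map (algebraMap ℤ (𝓞 K₁)) (Ideal.span {(p : ℤ)})} ∪
       {p : ℕ | p.Prime ∧ ∃ P : Ideal (𝓞 K₂), Prime P ∧
        P ^ 2 ∣ Ideal.map (algebraMap ℤ (𝓞 K₂)) (Ideal.span {(p : ℤ)})})).Finite :=
    h.union ((ramified_finite K₁).union (ramified_finite K₂))
  have hinf : {p : ℕ | p.Prime}.Infinite := Nat.infinite_setOf_prime
  obtain ⟨p, hpmem, hpnot⟩ := (hinf.diff hbad).nonempty
  have hp : p.Prime := hpmem
  have hur₁ : ∀ P : Ideal (𝓞 K₁), Prime P →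
      ¬ (P ^ 2 ∣ Ideal.map (algebraMap ℤ (𝓞 K₁)) (Ideal.span {(p : ℤ)})) := by
    intro P hP hd
    exact hpnot (Or.inr (Or.inl ⟨hp, P, hP, hd⟩))
  have hur₂ : ∀ P : Ideal (𝓞 K₂), Prime P →
      ¬ (P ^ 2 ∣ Ideal.map (algebraMap ℤ (𝓞 K₂)) (Ideal.span {(p : ℤ)})) := by
    intro P hP hd
    exact hpnot (Or.inr (Or.inr ⟨hp, P, hP, hd⟩))
  have heq : splittingType K₁ p = splittingType K₂ p := by
    by_contra hne
    exact hpnot (Or.inl ⟨hp, hne⟩)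
  rw [← sum_splittingType K₁ hp hur₁, ← sum_splittingType K₂ hp hur₂, heq]
end
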